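/- Let $n \ge 1$ and $d \ge 1$ be integers, and let $A = (a_{ij})_{0 \le i,j \le n}$ be an $(n+1)\times(n+1)$ matrix with nonnegative integer entries such that every row sums to $d$, and such that $d^2$ does not divide $\det(A)$. Then there exists a subset $S \subseteq \{0,1,\dots,n\}$ with $|S| \le \lfloor n/2 \rfloor + 1$ such that every row of $A$ has a nonzero entry in some column indexed by $S$ (i.e. for every $i \in \{0,\dots,n\}$ there exists $j \in S$ with $a_{ij} \ne 0$). -/

import Mathlib

open Matrix Finset

variable {κ : Type*} [Fintype κ] [DecidableEq κ]

/-- all row sums equal z ⇒ z divides det -/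
lemma rowsum_dvd_det [Nonempty κ] (M : Matrix κ κ ℤ) (z : ℤ)
    (h : ∀ i, ∑ j, M i j = z) : z ∣ M.det := by
  have h1 : M *ᵥ (fun _ => (1:ℤ)) = fun _ => z := by
    ext i; simpa [Matrix.mulVec, dotProduct] using h i
  obtain ⟨i0⟩ := ‹Nonempty κ›
  have h2 : (M.adjugate * M) *ᵥ (fun _ => (1:ℤ)) = fun i => z * ∑ j, M.adjugate i j := by
    rw [← Matrix.mulVec_mulVec, h1]
    ext i
    simp [Matrix.mulVec, dotProduct, Finset.mul_sum, mul_comm]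
  rw [Matrix.adjugate_mul] at h2
  have h3 : M.det = z * ∑ j, M.adjugate i0 j := by
    have := congrFun h2 i0
    simpa [Matrix.smul_mulVec, Matrix.one_mulVec] using this
  exact ⟨_, h3⟩

/-- overfull zero block ⇒ det = 0 -/
lemma det_eq_zero_of_block (M : Matrix κ κ ℤ) (I J : Finset κ)
    (h0 : ∀ i ∈ I, ∀ j ∉ J, M i j = 0) (hc : J.card < I.card) : M.det = 0 := by
  rw [Matrix.det_apply]
  apply Finset.sum_eq_zero
  intro σ _
  have : ∃ i, σ i ∈ I ∧ i ∉ J := by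
    by_contra hcon
    push_neg at hcon
    have hsub : I ⊆ J.image σ := by
      intro x hx
      have hj : σ.symm x ∈ J := hcon _ (by simpa using hx)
      exact Finset.mem_image.2 ⟨σ.symm x, hj, by simp⟩
    have := Finset.card_le_card hsub
    have := Finset.card_image_le (s := J) (f := σ)
    omega
  obtain ⟨i, hiI, hiJ⟩ := this
  have : ∏ i, M (σ i) i = 0 :=
    Finset.prod_eq_zero (Finset.mem_univ i) (h0 _ hiI _ hiJ)
  rw [this, smul_zero]


lemma det_split (M : Matrix κ κ ℤ) (p q : κ → Prop) [DecidablePred p] [DecidablePred q]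
    (φ1 : {a // p a} ≃ {a // q a}) (φ2 : {a // ¬p a} ≃ {a // ¬q a})
    (h0 : ∀ i j, p i → ¬ q j → M i j = 0) :
    ∃ u : ℤˣ, M.det = u * (Matrix.det fun i j : {a // p a} => M i (φ1 j))
      * (Matrix.det fun i j : {a // ¬p a} => M i (φ2 j)) := by
  set e : {a // p a} ⊕ {a // ¬p a} ≃ κ := Equiv.sumCompl p with he
  set f : {a // p a} ⊕ {a // ¬p a} ≃ κ := (φ1.sumCongr φ2).trans (Equiv.sumCompl q) with hf
  set π : Equiv.Perm ({a // p a} ⊕ {a // ¬p a}) := f.trans e.symm with hπ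
  have hM : M.submatrix e f = (M.submatrix e e).submatrix id π := by
    ext i j
    simp [Matrix.submatrix, hπ]
  have hdet1 : (M.submatrix e f).det = Equiv.Perm.sign π * M.det := by
    rw [hM, Matrix.det_permute', Matrix.det_submatrix_equiv_self]; norm_cast
  -- block structure
  have hblock : (M.submatrix e f).toBlocks₁₂ = 0 := by
    ext i j
    have : ¬ q ((φ2 j : κ)) := (φ2 j).2
    exact h0 _ _ i.2 this
  have hdet2 : (M.submatrix e f).det
      = ((M.submatrix e f).toBlocks₁₁).det * ((M.submatrix e f).toBlocks₂₂).det := by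
    conv_lhs => rw [← Matrix.fromBlocks_toBlocks (M.submatrix e f), hblock]
    exact Matrix.det_fromBlocks_zero₁₂ _ _ _
  have h11 : (M.submatrix e f).toBlocks₁₁ = fun i j : {a // p a} => M i (φ1 j) := by
    ext i j; simp [Matrix.toBlocks₁₁, Matrix.submatrix, he, hf]
  have h22 : (M.submatrix e f).toBlocks₂₂ = fun i j : {a // ¬p a} => M i (φ2 j) := by
    ext i j; simp [Matrix.toBlocks₂₂, Matrix.submatrix, he, hf]
  refine ⟨Equiv.Perm.sign π, ?_⟩
  have hsgn : (Equiv.Perm.sign π : ℤ) * (Equiv.Perm.sign π : ℤ) = 1 := by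
    rcases Int.units_eq_one_or (Equiv.Perm.sign π) with h | h <;> simp [h]
  have key : (Matrix.det fun i j : {a // p a} => M i (φ1 j))
      * (Matrix.det fun i j : {a // ¬p a} => M i (φ2 j))
      = (Equiv.Perm.sign π : ℤ) * M.det := by
    rw [← hdet1, hdet2, h11, h22]
  have key2 : M.det = (Equiv.Perm.sign π : ℤ)
      * ((Matrix.det fun i j : {a // p a} => M i (φ1 j))
      * (Matrix.det fun i j : {a // ¬p a} => M i (φ2 j))) := by
    rw [key, ← mul_assoc, hsgn, one_mul]
  rw [key2]; ring








lemma block_dvd_det (M : Matrix κ κ ℤ) (z : ℤ) (I J : Finset κ)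
    (h0 : ∀ i ∈ I, ∀ j ∉ J, M i j = 0) (hne : I.Nonempty)
    (hsum : ∀ i ∈ I, ∑ j, M i j = z) (hcard : J.card ≤ I.card) : z ∣ M.det := by
  rcases lt_or_eq_of_le hcard with hlt | heq
  · rw [det_eq_zero_of_block M I J h0 hlt]; exact dvd_zero z
  · have hcc : Fintype.card {a // a ∈ I} = Fintype.card {a // a ∈ J} := by
      rw [Fintype.card_coe, Fintype.card_coe, heq]
    have hcc2 : Fintype.card {a // ¬ a ∈ I} = Fintype.card {a // ¬ a ∈ J} := by
      rw [Fintype.card_subtype_compl, Fintype.card_subtype_compl, hcc]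
    obtain ⟨u, hu⟩ := det_split M (· ∈ I) (· ∈ J) (Fintype.equivOfCardEq hcc)
      (Fintype.equivOfCardEq hcc2) (fun i j hi hj => h0 i hi j hj)
    rw [hu]
    refine Dvd.dvd.mul_right (Dvd.dvd.mul_left ?_ _) _
    have : Nonempty {a // a ∈ I} := by
      obtain ⟨x, hx⟩ := hne; exact ⟨⟨x, hx⟩⟩
    set φ1 := Fintype.equivOfCardEq hcc with hφ1
    have h2 : z ∣ Matrix.det (fun i j : {a // a ∈ I} => M i (φ1 j)) := by
      apply rowsum_dvd_det
      intro i
      have e1 : ∑ j : {a // a ∈ I}, M (i:κ) ((φ1 j : {a // a ∈ J}) : κ)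
          = ∑ j : {a // a ∈ J}, M (i:κ) (j : κ) :=
        Equiv.sum_comp φ1 (fun j : {a // a ∈ J} => M (i:κ) (j : κ))
      have e2 : ∑ j : {a // a ∈ J}, M (i:κ) (j : κ) = ∑ j ∈ J, M (i:κ) j :=
        Finset.sum_coe_sort J _
      have e3 : ∑ j ∈ J, M (i:κ) j = ∑ j, M (i:κ) j := by
        apply Finset.sum_subset (Finset.subset_univ J)
        intro x _ hx
        exact h0 _ i.2 _ hx
      rw [e1, e2, e3]
      exact hsum _ i.2
    convert h2 using 2 <;> first | rfl | exact Subsingleton.elim _ _ | exact congrArg (fun inst => @Matrix.det _ _ inst _ _ _) (Subsingleton.elim _ _)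


lemma two_blocks_dvd_det (M : Matrix κ κ ℤ) (z : ℤ) (I1 J1 I2 J2 : Finset κ)
    (h01 : ∀ i ∈ I1, ∀ j ∉ J1, M i j = 0) (h02 : ∀ i ∈ I2, ∀ j ∉ J2, M i j = 0)
    (hJd : Disjoint J1 J2) (hId : Disjoint I1 I2)
    (hne1 : I1.Nonempty) (hne2 : I2.Nonempty)
    (hc1 : J1.card ≤ I1.card) (hc2 : J2.card ≤ I2.card)
    (hsum : ∀ i, ∑ j, M i j = z) : z^2 ∣ M.det := by
  rcases lt_or_eq_of_le hc1 with hlt | heq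
  · rw [det_eq_zero_of_block M I1 J1 h01 hlt]; exact dvd_zero _
  · have hcc : Fintype.card {a // a ∈ I1} = Fintype.card {a // a ∈ J1} := by
      rw [Fintype.card_coe, Fintype.card_coe, heq]
    have hcc2 : Fintype.card {a // ¬ a ∈ I1} = Fintype.card {a // ¬ a ∈ J1} := by
      rw [Fintype.card_subtype_compl, Fintype.card_subtype_compl, hcc]
    obtain ⟨u, hu⟩ := det_split M (· ∈ I1) (· ∈ J1) (Fintype.equivOfCardEq hcc)
      (Fintype.equivOfCardEq hcc2) (fun i j hi hj => h01 i hi j hj)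
    rw [hu, mul_assoc]
    apply Dvd.dvd.mul_left
    rw [pow_two]
    apply mul_dvd_mul
    · -- first block
      have hne' : Nonempty {a // a ∈ I1} := by
        obtain ⟨x, hx⟩ := hne1; exact ⟨⟨x, hx⟩⟩
      set φ1 := Fintype.equivOfCardEq hcc with hφ1
      have h2 : z ∣ Matrix.det (fun i j : {a // a ∈ I1} => M i (φ1 j)) := by
        apply rowsum_dvd_det
        intro i
        have e1 : ∑ j : {a // a ∈ I1}, M (i:κ) ((φ1 j : {a // a ∈ J1}) : κ)
            = ∑ j : {a // a ∈ J1}, M (i:κ) (j : κ) :=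
          Equiv.sum_comp φ1 (fun j : {a // a ∈ J1} => M (i:κ) (j : κ))
        have e2 : ∑ j : {a // a ∈ J1}, M (i:κ) (j : κ) = ∑ j ∈ J1, M (i:κ) j :=
          Finset.sum_coe_sort J1 _
        have e3 : ∑ j ∈ J1, M (i:κ) j = ∑ j, M (i:κ) j := by
          apply Finset.sum_subset (Finset.subset_univ J1)
          intro x _ hx
          exact h01 _ i.2 _ hx
        rw [e1, e2, e3]
        exact hsum _
      convert h2 using 2 <;> first | rfl | exact Subsingleton.elim _ _ | exact congrArg (fun inst => @Matrix.det _ _ inst _ _ _) (Subsingleton.elim _ _)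
    · -- second block
      set φ2 := Fintype.equivOfCardEq hcc2 with hφ2
      have h3 : z ∣ Matrix.det (fun i j : {a // ¬ a ∈ I1} => M i (φ2 j)) := by
        set I2' : Finset {a // ¬ a ∈ I1} := Finset.univ.filter (fun i => (i:κ) ∈ I2) with hI2'
        set J2' : Finset {a // ¬ a ∈ I1} :=
          Finset.univ.filter (fun j => ((φ2 j : {a // ¬ a ∈ J1}) : κ) ∈ J2) with hJ2'
        refine @block_dvd_det _ _ _ _ z I2' J2' ?_ ?_ ?_ ?_
        · intro i hi j hj
          simp only [hI2', hJ2', Finset.mem_filter, Finset.mem_univ, true_and] at hi hj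
          exact h02 _ hi _ hj
        · obtain ⟨x, hx⟩ := hne2
          have hx1 : ¬ x ∈ I1 := fun h => (Finset.disjoint_left.mp hId) h hx
          exact ⟨⟨x, hx1⟩, by simp [hI2', hx]⟩
        · intro i hi
          simp only [hI2', Finset.mem_filter, Finset.mem_univ, true_and] at hi
          have e1 : ∑ j : {a // ¬ a ∈ I1}, M (i:κ) ((φ2 j : {a // ¬ a ∈ J1}) : κ)
              = ∑ j : {a // ¬ a ∈ J1}, M (i:κ) (j : κ) :=
            Equiv.sum_comp φ2 (fun j : {a // ¬ a ∈ J1} => M (i:κ) (j : κ))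
          have e2 : ∑ j : {a // ¬ a ∈ J1}, M (i:κ) (j : κ) = ∑ j ∈ J1ᶜ, M (i:κ) j := by
            rw [← Finset.sum_coe_sort (J1ᶜ) (fun j => M (i:κ) j)]
            apply Finset.sum_equiv (Equiv.subtypeEquivRight (q := (· ∈ J1ᶜ)) (by intro x; simp))
            · simp
            · intros; rfl
          have e3 : ∑ j ∈ J1ᶜ, M (i:κ) j = z := by
            have h4 : ∑ j ∈ J1, M (i:κ) j = 0 := by
              apply Finset.sum_eq_zero
              intro x hx
              exact h02 _ hi _ (Finset.disjoint_left.mp hJd hx)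
            have h5 := Finset.sum_compl_add_sum J1 (fun j => M (i:κ) j)
            rw [h4, add_zero] at h5
            rw [h5]; exact hsum _
          rw [e1, e2, e3]
        · have hI2c : I2'.card = I2.card := by
            have himg : I2'.image Subtype.val = I2 := by
              ext x
              simp only [Finset.mem_image, hI2', Finset.mem_filter, Finset.mem_univ, true_and]
              constructor
              · rintro ⟨⟨y, hy1⟩, hy2, rfl⟩; exact hy2
              · intro hx
                exact ⟨⟨x, fun h => (Finset.disjoint_left.mp hId) h hx⟩, hx, rfl⟩
            rw [← himg, Finset.card_image_of_injective _ Subtype.val_injective]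
          have hJ2c : J2'.card = J2.card := by
            have himg : J2'.image (fun j => ((φ2 j : {a // ¬ a ∈ J1}) : κ)) = J2 := by
              ext x
              simp only [Finset.mem_image, hJ2', Finset.mem_filter, Finset.mem_univ, true_and]
              constructor
              · rintro ⟨y, hy2, rfl⟩; exact hy2
              · intro hx
                have hx1 : ¬ x ∈ J1 := fun h => (Finset.disjoint_left.mp hJd) h hx
                refine ⟨φ2.symm ⟨x, hx1⟩, ?_, ?_⟩ <;> simp [hx]
            rw [← himg, Finset.card_image_of_injective]
            exact Subtype.val_injective.comp φ2.injective
          rw [hI2c, hJ2c]; exact hc2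
  
      convert h3 using 2 <;> first | rfl | exact Subsingleton.elim _ _

variable {ι χ : Type*} [DecidableEq ι] [DecidableEq χ]

/-- intersection of two snug families containing a common element is snug -/
lemma snug_inter (supp : ι → Finset χ) (F J1 J2 : Finset ι)
    (hsur : ∀ J ⊆ F, J.Nonempty → J.card + 1 ≤ (J.biUnion supp).card)
    (h1F : J1 ⊆ F) (h2F : J2 ⊆ F)
    (h1 : (J1.biUnion supp).card = J1.card + 1) (h2 : (J2.biUnion supp).card = J2.card + 1)
    (hne : (J1 ∩ J2).Nonempty) :
    ((J1 ∩ J2).biUnion supp).card = (J1 ∩ J2).card + 1 := by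
  have hU : (J1 ∪ J2).biUnion supp = J1.biUnion supp ∪ J2.biUnion supp := by
    ext x
    simp only [Finset.mem_biUnion, Finset.mem_union]
    constructor
    · rintro ⟨i, hi | hi, hx⟩
      · exact Or.inl ⟨i, hi, hx⟩
      · exact Or.inr ⟨i, hi, hx⟩
    · rintro (⟨i, hi, hx⟩ | ⟨i, hi, hx⟩)
      · exact ⟨i, Or.inl hi, hx⟩
      · exact ⟨i, Or.inr hi, hx⟩
  have hsubU : (J1 ∩ J2).biUnion supp ⊆ (J1.biUnion supp) ∩ (J2.biUnion supp) := by
    intro x hx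
    rw [Finset.mem_biUnion] at hx
    obtain ⟨i, hi, hx⟩ := hx
    rw [Finset.mem_inter] at hi
    exact Finset.mem_inter.mpr ⟨Finset.mem_biUnion.mpr ⟨i, hi.1, hx⟩,
      Finset.mem_biUnion.mpr ⟨i, hi.2, hx⟩⟩
  have c1 := Finset.card_union_add_card_inter (J1.biUnion supp) (J2.biUnion supp)
  have c2 := Finset.card_union_add_card_inter J1 J2
  have c3 : (J1 ∪ J2).card + 1 ≤ ((J1 ∪ J2).biUnion supp).card :=
    hsur _ (Finset.union_subset h1F h2F)
      (hne.mono ((Finset.inter_subset_left).trans Finset.subset_union_left))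
  have c4 : (J1 ∩ J2).card + 1 ≤ ((J1 ∩ J2).biUnion supp).card :=
    hsur _ ((Finset.inter_subset_left).trans h1F) hne
  have c5 := Finset.card_le_card hsubU
  rw [← hU] at c1
  omega

lemma cover_lemma :
    ∀ (k : ℕ) (supp : ι → Finset χ) (F : Finset ι),
      (∑ i ∈ F, (supp i).card) ≤ k →
      (∀ J ⊆ F, J.Nonempty → J.card + 1 ≤ (J.biUnion supp).card) →
      ∃ C : Finset χ, C.card ≤ (F.biUnion supp).card / 2 ∧ ∀ i ∈ F, ∃ c ∈ C, c ∈ supp i := by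
  intro k
  induction k with
  | zero =>
      intro supp F hk hsur
      rcases F.eq_empty_or_nonempty with rfl | hFne
      · exact ⟨∅, by simp⟩
      · exfalso
        obtain ⟨i, hi⟩ := hFne
        have h1 := hsur {i} (by simpa) ⟨i, Finset.mem_singleton_self i⟩
        rw [Finset.singleton_biUnion, Finset.card_singleton] at h1
        have h2 : (supp i).card ≤ 0 := le_trans (Finset.single_le_sum (f := fun a => (supp a).card) (fun _ _ => Nat.zero_le _) hi) hk
        omega
  | succ k ih =>
      intro supp F hk hsur
      rcases F.eq_empty_or_nonempty with rfl | hFne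
      · exact ⟨∅, by simp⟩
      by_cases hbig : ∃ i ∈ F, 3 ≤ (supp i).card
      · obtain ⟨i, hiF, h3⟩ := hbig
        by_cases hbl : ∀ c ∈ supp i, ∃ J, J ⊆ F ∧ i ∈ J ∧
            (J.biUnion supp).card = J.card + 1 ∧ c ∉ (J.erase i).biUnion supp
        · exfalso
          have key : ∀ s : Finset χ, s ⊆ supp i → ∃ J, J ⊆ F ∧ i ∈ J ∧
              (J.biUnion supp).card = J.card + 1 ∧ ∀ c ∈ s, c ∉ (J.erase i).biUnion supp := by
            intro s
            induction s using Finset.induction_on with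
            | empty =>
                intro _
                obtain ⟨c0, hc0⟩ := Finset.card_pos.mp (show 0 < (supp i).card by omega)
                obtain ⟨J, hJ1, hJ2, hJ3, _⟩ := hbl c0 hc0
                exact ⟨J, hJ1, hJ2, hJ3, by simp⟩
            | @insert a s ha hIH =>
                intro hs
                obtain ⟨J1, hJ1F, hiJ1, hsn1, hpr1⟩ :=
                  hIH ((Finset.subset_insert a s).trans hs)
                obtain ⟨J2, hJ2F, hiJ2, hsn2, hpr2⟩ := hbl a (hs (Finset.mem_insert_self a s))
                have hneI : (J1 ∩ J2).Nonempty := ⟨i, Finset.mem_inter.mpr ⟨hiJ1, hiJ2⟩⟩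
                refine ⟨J1 ∩ J2, (Finset.inter_subset_left).trans hJ1F,
                  Finset.mem_inter.mpr ⟨hiJ1, hiJ2⟩,
                  snug_inter supp F J1 J2 hsur hJ1F hJ2F hsn1 hsn2 hneI, ?_⟩
                intro c hc
                rcases Finset.mem_insert.mp hc with rfl | hcs
                · intro hmem
                  apply hpr2
                  exact Finset.biUnion_subset_biUnion_of_subset_left supp
                    (Finset.erase_subset_erase i Finset.inter_subset_right) hmem
                · intro hmem
                  apply hpr1 c hcs
                  exact Finset.biUnion_subset_biUnion_of_subset_left supp
                    (Finset.erase_subset_erase i Finset.inter_subset_left) hmem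
          obtain ⟨J, hJF, hiJ, hsnug, hprop⟩ := key (supp i) (Finset.Subset.refl _)
          rcases (J.erase i).eq_empty_or_nonempty with he | hne2
          · have hJi : J = {i} := by
              apply Finset.Subset.antisymm
              · intro x hx
                by_contra hxi
                have : x ∈ J.erase i := Finset.mem_erase.mpr ⟨by simpa using hxi, hx⟩
                rw [he] at this
                exact absurd this (Finset.notMem_empty x)
              · intro x hx
                rw [Finset.mem_singleton] at hx
                exact hx ▸ hiJ
            rw [hJi, Finset.singleton_biUnion, Finset.card_singleton] at hsnug
            omega
          · have hJU : J.biUnion supp = ((J.erase i).biUnion supp) ∪ supp i := by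
              conv_lhs => rw [← Finset.insert_erase hiJ]
              rw [Finset.biUnion_insert, Finset.union_comm]
            have hdisj : Disjoint ((J.erase i).biUnion supp) (supp i) := by
              rw [Finset.disjoint_right]
              intro c hc
              exact hprop c hc
            have hcard : (J.biUnion supp).card
                = ((J.erase i).biUnion supp).card + (supp i).card := by
              rw [hJU, Finset.card_union_of_disjoint hdisj]
            have h5 := hsur (J.erase i) ((Finset.erase_subset _ _).trans hJF) hne2
            have h6 : (J.erase i).card = J.card - 1 := Finset.card_erase_of_mem hiJ
            have h7 : 1 ≤ J.card := Finset.card_pos.mpr ⟨i, hiJ⟩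
            omega
        · -- there is a deletable column c in supp i
          push_neg at hbl
          obtain ⟨c, hc, hcdel⟩ := hbl
          set supp' := Function.update supp i ((supp i).erase c) with hs'
          have hsub' : ∀ a, supp' a ⊆ supp a := by
            intro a
            by_cases hai : a = i
            · subst hai; rw [hs', Function.update_self]; exact Finset.erase_subset _ _
            · rw [hs', Function.update_of_ne hai]
          have hbiU : ∀ J : Finset ι, i ∉ J → J.biUnion supp' = J.biUnion supp := by
            intro J hiJ
            apply Finset.biUnion_congr rfl
            intro a haJ
            have hai : a ≠ i := fun h => hiJ (h ▸ haJ)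
            rw [hs', Function.update_of_ne hai]
          have hsur' : ∀ J ⊆ F, J.Nonempty → J.card + 1 ≤ (J.biUnion supp').card := by
            intro J hJF hJne
            by_cases hiJ : i ∈ J
            · have hUdec : J.biUnion supp' = ((J.erase i).biUnion supp) ∪ (supp i).erase c := by
                conv_lhs => rw [← Finset.insert_erase hiJ]
                rw [Finset.biUnion_insert, hbiU _ (Finset.notMem_erase i J), hs',
                  Function.update_self, Finset.union_comm]
              have hUdec2 : J.biUnion supp = ((J.erase i).biUnion supp) ∪ supp i := by
                conv_lhs => rw [← Finset.insert_erase hiJ]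
                rw [Finset.biUnion_insert, Finset.union_comm]
              by_cases hcU : c ∈ (J.erase i).biUnion supp
              · have heqU : J.biUnion supp' = J.biUnion supp := by
                  rw [hUdec, hUdec2]
                  apply Finset.Subset.antisymm
                  · exact Finset.union_subset_union (Finset.Subset.refl _) (Finset.erase_subset _ _)
                  · intro x hx
                    rcases Finset.mem_union.mp hx with hx1 | hx2
                    · exact Finset.mem_union_left _ hx1
                    · by_cases hxc : x = c
                      · exact Finset.mem_union_left _ (hxc ▸ hcU)
                      · exact Finset.mem_union_right _ (Finset.mem_erase.mpr ⟨hxc, hx2⟩)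
                rw [heqU]
                exact hsur J hJF hJne
              · have hnots : (J.biUnion supp).card ≠ J.card + 1 :=
                  fun hsnugJ => hcU (hcdel J hJF hiJ hsnugJ)
                have h8 := hsur J hJF hJne
                have h9 : J.biUnion supp ⊆ (J.biUnion supp') ∪ {c} := by
                  intro x hx
                  by_cases hxc : x = c
                  · exact Finset.mem_union_right _ (by simp [hxc])
                  · apply Finset.mem_union_left
                    rw [hUdec]
                    rw [hUdec2] at hx
                    rcases Finset.mem_union.mp hx with hx1 | hx2
                    · exact Finset.mem_union_left _ hx1
                    · exact Finset.mem_union_right _ (Finset.mem_erase.mpr ⟨hxc, hx2⟩)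
                have h10 := Finset.card_le_card h9
                have h11 := Finset.card_union_le (J.biUnion supp') ({c} : Finset χ)
                rw [Finset.card_singleton] at h11
                omega
            · rw [hbiU J hiJ]
              exact hsur J hJF hJne
          have hmeas : ∑ a ∈ F, (supp' a).card ≤ k := by
            have e1 : (supp' i).card + ∑ a ∈ F.erase i, (supp' a).card
                = ∑ a ∈ F, (supp' a).card := Finset.add_sum_erase F (fun a => (supp' a).card) hiF
            have e2 : (supp i).card + ∑ a ∈ F.erase i, (supp a).card
                = ∑ a ∈ F, (supp a).card := Finset.add_sum_erase F (fun a => (supp a).card) hiF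
            have e3 : ∑ a ∈ F.erase i, (supp' a).card = ∑ a ∈ F.erase i, (supp a).card := by
              apply Finset.sum_congr rfl
              intro a ha
              rw [hs', Function.update_of_ne (Finset.ne_of_mem_erase ha)]
            have e4 : (supp' i).card = (supp i).card - 1 := by
              rw [hs', Function.update_self, Finset.card_erase_of_mem hc]
            omega
          obtain ⟨C, hC1, hC2⟩ := ih supp' F hmeas hsur'
          refine ⟨C, le_trans hC1 (Nat.div_le_div_right (Finset.card_le_card ?_)), ?_⟩
          · intro x hx
            rw [Finset.mem_biUnion] at hx ⊢
            obtain ⟨a, haF, hxa⟩ := hx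
            exact ⟨a, haF, hsub' a hxa⟩
          · intro a haF
            obtain ⟨cc, hcc1, hcc2⟩ := hC2 a haF
            exact ⟨cc, hcc1, hsub' a hcc2⟩
      · -- all supports have exactly 2 elements
        push_neg at hbig
        have hcard2 : ∀ a ∈ F, (supp a).card = 2 := by
          intro a ha
          have h1 := hsur {a} (by simpa) ⟨a, Finset.mem_singleton_self a⟩
          rw [Finset.singleton_biUnion, Finset.card_singleton] at h1
          have h2 := hbig a ha
          omega
        have hleaf : ∃ i0 ∈ F, ∃ b ∈ supp i0, b ∉ (F.erase i0).biUnion supp := by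
          by_contra hno
          push_neg at hno
          have hdc : ∀ v ∈ F.biUnion supp, 2 ≤ (F.filter (fun a => v ∈ supp a)).card := by
            intro v hv
            rw [Finset.mem_biUnion] at hv
            obtain ⟨a, haF, hva⟩ := hv
            have hvb := hno a haF v hva
            rw [Finset.mem_biUnion] at hvb
            obtain ⟨a', ha'F, hva'⟩ := hvb
            have hne' : a' ≠ a := Finset.ne_of_mem_erase ha'F
            have : {a, a'} ⊆ F.filter (fun x => v ∈ supp x) := by
              intro x hx
              rcases Finset.mem_insert.mp hx with rfl | hx
              · exact Finset.mem_filter.mpr ⟨haF, hva⟩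
              · rw [Finset.mem_singleton] at hx
                exact hx ▸ Finset.mem_filter.mpr ⟨Finset.mem_of_mem_erase ha'F, hva'⟩
            have h2 := Finset.card_le_card this
            rwa [Finset.card_insert_of_notMem (by simpa using hne'.symm),
              Finset.card_singleton] at h2
          have hsum1 : ∑ a ∈ F, (supp a).card
              = ∑ v ∈ F.biUnion supp, (F.filter (fun a => v ∈ supp a)).card := by
            have e1 : ∀ a ∈ F, (supp a).card
                = ∑ v ∈ F.biUnion supp, (if v ∈ supp a then 1 else 0) := by
              intro a ha
              have hfe : (F.biUnion supp).filter (fun v => v ∈ supp a) = supp a := by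
                apply Finset.Subset.antisymm
                · intro x hx
                  exact (Finset.mem_filter.mp hx).2
                · intro x hx
                  exact Finset.mem_filter.mpr ⟨Finset.mem_biUnion.mpr ⟨a, ha, hx⟩, hx⟩
              calc (supp a).card = ((F.biUnion supp).filter (fun v => v ∈ supp a)).card := by
                    rw [hfe]
                _ = ∑ v ∈ F.biUnion supp, (if v ∈ supp a then 1 else 0) :=
                    Finset.card_filter _ _
            rw [Finset.sum_congr rfl e1, Finset.sum_comm]
            apply Finset.sum_congr rfl
            intro v _
            rw [← Finset.card_filter]
          have h12 : 2 * (F.biUnion supp).card ≤ ∑ a ∈ F, (supp a).card := by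
            rw [hsum1]
            have e7 : ∑ _v ∈ F.biUnion supp, 2 = 2 * (F.biUnion supp).card := by
              rw [Finset.sum_const, smul_eq_mul, mul_comm]
            have e8 := Finset.sum_le_sum hdc
            omega
          have h13 : ∑ a ∈ F, (supp a).card = 2 * F.card := by
            rw [Finset.sum_congr rfl hcard2, Finset.sum_const]
            ring
          have h14 := hsur F (Finset.Subset.refl F) hFne
          omega
        obtain ⟨i0, hi0F, b, hbsupp, hbout⟩ := hleaf
        have h2 : (supp i0).card = 2 := hcard2 _ hi0F
        obtain ⟨x, y, hxy, hset⟩ := Finset.card_eq_two.mp h2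
        have hbxy : b = x ∨ b = y := by
          rw [hset] at hbsupp
          simpa using hbsupp
        set a : χ := if b = x then y else x with hadef
        have hab : a ≠ b := by
          rcases hbxy with rfl | rfl
          · simp only [hadef, if_pos rfl]; exact fun h => hxy h.symm
          · by_cases hbx : b = x
            · exact absurd hbx.symm hxy
            · simp only [hadef, if_neg hbx]; exact fun h => hxy h
        have hasupp : a ∈ supp i0 := by
          rw [hset]
          rcases Classical.em (b = x) with hbx | hbx <;> simp [hadef, hbx]
        set F' := F.filter (fun i => a ∉ supp i) with hF'
        have hF'sub : F' ⊆ F := Finset.filter_subset _ _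
        have hi0notF' : i0 ∉ F' := by
          rw [hF', Finset.mem_filter]
          push_neg
          intro _
          simpa using hasupp
        have hF'sub2 : F' ⊆ F.erase i0 := by
          intro z hz
          exact Finset.mem_erase.mpr ⟨fun h => hi0notF' (h ▸ hz), hF'sub hz⟩
        have hmeas' : ∑ i ∈ F', (supp i).card ≤ k := by
          have e1 : ∑ i ∈ F', (supp i).card ≤ ∑ i ∈ F.erase i0, (supp i).card :=
            Finset.sum_le_sum_of_subset hF'sub2
          have e2 : (supp i0).card + ∑ i ∈ F.erase i0, (supp i).card
              = ∑ i ∈ F, (supp i).card := Finset.add_sum_erase F (fun a => (supp a).card) hi0F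
          omega
        obtain ⟨C', hC'1, hC'2⟩ := ih supp F' hmeas'
          (fun J hJ hne => hsur J (hJ.trans hF'sub) hne)
        have haU : a ∈ F.biUnion supp := Finset.mem_biUnion.mpr ⟨i0, hi0F, hasupp⟩
        have hbU : b ∈ F.biUnion supp := Finset.mem_biUnion.mpr ⟨i0, hi0F, hbsupp⟩
        have hUF' : F'.biUnion supp ⊆ ((F.biUnion supp).erase b).erase a := by
          intro v hv
          rw [Finset.mem_biUnion] at hv
          obtain ⟨z, hzF', hvz⟩ := hv
          have hva : v ≠ a := fun h => (Finset.mem_filter.mp hzF').2 (h ▸ hvz)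
          have hvb : v ≠ b := by
            intro h
            apply hbout
            rw [Finset.mem_biUnion]
            exact ⟨z, hF'sub2 hzF', h ▸ hvz⟩
          exact Finset.mem_erase.mpr ⟨hva, Finset.mem_erase.mpr ⟨hvb,
            Finset.mem_biUnion.mpr ⟨z, hF'sub hzF', hvz⟩⟩⟩
        have hcardle : (F'.biUnion supp).card + 2 ≤ (F.biUnion supp).card := by
          have e1 := Finset.card_le_card hUF'
          have e2 : ((F.biUnion supp).erase b).card = (F.biUnion supp).card - 1 :=
            Finset.card_erase_of_mem hbU
          have e3 : (((F.biUnion supp).erase b).erase a).card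
              = ((F.biUnion supp).erase b).card - 1 :=
            Finset.card_erase_of_mem (Finset.mem_erase.mpr ⟨hab, haU⟩)
          have e4 : 1 ≤ (F.biUnion supp).card := Finset.card_pos.mpr ⟨b, hbU⟩
          have e5 : b ∈ (F.biUnion supp) := hbU
          have e6 : 2 ≤ (F.biUnion supp).card := by
            have : {a, b} ⊆ F.biUnion supp := by
              intro z hz
              rcases Finset.mem_insert.mp hz with rfl | hz
              · exact haU
              · rw [Finset.mem_singleton] at hz; exact hz ▸ hbU
            have h7 := Finset.card_le_card this
            rwa [Finset.card_insert_of_notMem (by simpa using hab),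
              Finset.card_singleton] at h7
          omega
        refine ⟨insert a C', ?_, ?_⟩
        · have e1 := Finset.card_insert_le a C'
          have e6 : 2 ≤ (F.biUnion supp).card := by omega
          omega
        · intro z hzF
          by_cases hza : a ∈ supp z
          · exact ⟨a, Finset.mem_insert_self a C', hza⟩
          · obtain ⟨cc, hcc1, hcc2⟩ := hC'2 z (Finset.mem_filter.mpr ⟨hzF, hza⟩)
            exact ⟨cc, Finset.mem_insert_of_mem hcc1, hcc2⟩

/-- Combinatorial core of Theorem 2: if `A` is an `(n+1) × (n+1)` matrix with nonnegative
integer entries, all row sums equal to `d ≥ 1`, and `d²` does not divide `det A`, then there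
is a set `S` of at most `⌊n/2⌋ + 1` columns meeting the support of every row. -/
theorem exists_small_column_cover (n d : ℕ) (hn : 1 ≤ n) (hd : 1 ≤ d)
    (A : Matrix (Fin (n + 1)) (Fin (n + 1)) ℕ)
    (hrow : ∀ i, ∑ j, A i j = d)
    (hdet : ¬ ((d : ℤ) ^ 2 ∣ (A.map (fun a => (a : ℤ))).det)) :
    ∃ S : Finset (Fin (n + 1)), S.card ≤ n / 2 + 1 ∧
      ∀ i, ∃ j ∈ S, A i j ≠ 0 := by
  classical
  set B := A.map (fun a => (a : ℤ)) with hB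
  set supp : Fin (n + 1) → Finset (Fin (n + 1)) :=
    fun i => Finset.univ.filter (fun j => A i j ≠ 0) with hsupp
  have hsuppmem : ∀ i j, j ∈ supp i ↔ A i j ≠ 0 := by
    intro i j; simp [hsupp]
  have hsuppne : ∀ i, (supp i).Nonempty := by
    intro i
    by_contra h
    rw [Finset.not_nonempty_iff_eq_empty] at h
    have hz : ∑ j, A i j = 0 := by
      apply Finset.sum_eq_zero
      intro j _
      by_contra hj
      have hmem : j ∈ supp i := (hsuppmem i j).2 hj
      rw [h] at hmem
      exact absurd hmem (Finset.notMem_empty j)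
    rw [hrow i] at hz
    omega
  have hB0 : ∀ i j, B i j = 0 ↔ A i j = 0 := by
    intro i j
    rw [hB]
    simp [Matrix.map_apply]
  have hrowB : ∀ i, ∑ j, B i j = (d : ℤ) := by
    intro i
    rw [hB]
    have : ∑ j, ((A i j : ℤ)) = ((∑ j, A i j : ℕ) : ℤ) := (Nat.cast_sum _ _).symm
    simp only [Matrix.map_apply]
    rw [this, hrow i]
  have hdet0 : B.det ≠ 0 := fun h => hdet (h ▸ dvd_zero _)
  have hmatch : ∃ σ : Equiv.Perm (Fin (n + 1)), ∀ i, A i (σ i) ≠ 0 := by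
    by_contra h
    push_neg at h
    apply hdet0
    rw [Matrix.det_apply]
    apply Finset.sum_eq_zero
    intro σ _
    obtain ⟨i, hi⟩ := h σ⁻¹
    have : ∏ j, B (σ j) j = 0 := by
      apply Finset.prod_eq_zero (Finset.mem_univ (σ⁻¹ i))
      have : σ (σ⁻¹ i) = i := by simp
      rw [this, hB0]
      exact hi
    rw [this, smul_zero]
  obtain ⟨σ, hσ⟩ := hmatch
  have hσs : ∀ i, σ i ∈ supp i := fun i => (hsuppmem _ _).2 (hσ i)
  have hall : ∀ I : Finset (Fin (n + 1)), I.card ≤ (I.biUnion supp).card := by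
    intro I
    have hsub : I.image σ ⊆ I.biUnion supp := by
      intro j hj
      rw [Finset.mem_image] at hj
      obtain ⟨i, hi, rfl⟩ := hj
      exact Finset.mem_biUnion.mpr ⟨i, hi, hσs i⟩
    calc I.card = (I.image σ).card := (Finset.card_image_of_injective I σ.injective).symm
      _ ≤ _ := Finset.card_le_card hsub
  by_cases htwo : ∃ I1 I2 : Finset (Fin (n + 1)), I1.Nonempty ∧ I2.Nonempty ∧
      (I1.biUnion supp).card ≤ I1.card ∧ (I2.biUnion supp).card ≤ I2.card ∧
      Disjoint (I1.biUnion supp) (I2.biUnion supp)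
  · exfalso
    obtain ⟨I1, I2, hne1, hne2, ht1, ht2, hdisj⟩ := htwo
    apply hdet
    apply two_blocks_dvd_det B (d : ℤ) I1 (I1.biUnion supp) I2 (I2.biUnion supp)
    · intro i hi j hj
      rw [hB0]
      by_contra hA
      exact hj (Finset.mem_biUnion.mpr ⟨i, hi, (hsuppmem i j).2 hA⟩)
    · intro i hi j hj
      rw [hB0]
      by_contra hA
      exact hj (Finset.mem_biUnion.mpr ⟨i, hi, (hsuppmem i j).2 hA⟩)
    · exact hdisj
    · rw [Finset.disjoint_left]
      intro i hi1 hi2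
      exact Finset.disjoint_left.mp hdisj
        (Finset.mem_biUnion.mpr ⟨i, hi1, hσs i⟩)
        (Finset.mem_biUnion.mpr ⟨i, hi2, hσs i⟩)
    · exact hne1
    · exact hne2
    · exact ht1
    · exact ht2
    · exact hrowB
  · push_neg at htwo
    set TT := (Finset.univ : Finset (Finset (Fin (n + 1)))).filter
      (fun I => I.Nonempty ∧ (I.biUnion supp).card ≤ I.card) with hTT
    have hTTne : TT.Nonempty := by
      refine ⟨Finset.univ, ?_⟩
      rw [hTT, Finset.mem_filter]
      exact ⟨Finset.mem_univ _, Finset.univ_nonempty, Finset.card_le_univ _⟩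
    obtain ⟨I0, hI0TT, hI0min⟩ := Finset.exists_min_image TT Finset.card hTTne
    rw [hTT, Finset.mem_filter] at hI0TT
    obtain ⟨-, hI0ne, hI0t⟩ := hI0TT
    obtain ⟨i00, hi00⟩ := hI0ne
    have hI0ne : I0.Nonempty := ⟨i00, hi00⟩
    obtain ⟨j0, hj0⟩ := hsuppne i00
    have hj0U0 : j0 ∈ I0.biUnion supp := Finset.mem_biUnion.mpr ⟨i00, hi00, hj0⟩
    have hkey : ∀ I : Finset (Fin (n + 1)), I.Nonempty →
        (I.biUnion supp).card ≤ I.card → j0 ∈ I.biUnion supp := by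
      intro I hIne hIt
      have hndisj := htwo I I0 hIne hI0ne hIt hI0t
      rw [Finset.not_disjoint_iff] at hndisj
      obtain ⟨x, hx1, hx0⟩ := hndisj
      have hUU : (I ∪ I0).biUnion supp = (I.biUnion supp) ∪ (I0.biUnion supp) := by
        ext z
        simp only [Finset.mem_biUnion, Finset.mem_union]
        constructor
        · rintro ⟨a, ha | ha, hz⟩
          · exact Or.inl ⟨a, ha, hz⟩
          · exact Or.inr ⟨a, ha, hz⟩
        · rintro (⟨a, ha, hz⟩ | ⟨a, ha, hz⟩)
          · exact ⟨a, Or.inl ha, hz⟩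
          · exact ⟨a, Or.inr ha, hz⟩
      have c1 := Finset.card_union_add_card_inter (I.biUnion supp) (I0.biUnion supp)
      have c2 := Finset.card_union_add_card_inter I I0
      have c3 := hall (I ∪ I0)
      rw [hUU] at c3
      have c4 : 1 ≤ ((I.biUnion supp) ∩ (I0.biUnion supp)).card :=
        Finset.card_pos.mpr ⟨x, Finset.mem_inter.mpr ⟨hx1, hx0⟩⟩
      have hsubIU : (I ∩ I0).biUnion supp ⊆ (I.biUnion supp) ∩ (I0.biUnion supp) := by
        intro z hz
        rw [Finset.mem_biUnion] at hz
        obtain ⟨a, ha, hz⟩ := hz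
        rw [Finset.mem_inter] at ha
        exact Finset.mem_inter.mpr ⟨Finset.mem_biUnion.mpr ⟨a, ha.1, hz⟩,
          Finset.mem_biUnion.mpr ⟨a, ha.2, hz⟩⟩
      have c5 := Finset.card_le_card hsubIU
      have htII : ((I ∩ I0).biUnion supp).card ≤ (I ∩ I0).card := by omega
      have hIIne : (I ∩ I0).Nonempty := by
        rw [← Finset.card_pos]
        omega
      have hmem : (I ∩ I0) ∈ TT := by
        rw [hTT, Finset.mem_filter]
        exact ⟨Finset.mem_univ _, hIIne, htII⟩
      have h5 := hI0min _ hmem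
      have h6 : I ∩ I0 = I0 :=
        Finset.eq_of_subset_of_card_le Finset.inter_subset_right (by omega)
      have h7 : I0 ⊆ I := by
        rw [← h6]
        exact Finset.inter_subset_left
      exact Finset.biUnion_subset_biUnion_of_subset_left supp h7 hj0U0
    set R := Finset.univ.filter (fun i => j0 ∉ supp i) with hR
    have hsurR : ∀ J ⊆ R, J.Nonempty → J.card + 1 ≤ (J.biUnion supp).card := by
      intro J hJR hJne
      by_contra h
      push_neg at h
      have htJ : (J.biUnion supp).card ≤ J.card := by omega
      have hj0J := hkey J hJne htJ
      rw [Finset.mem_biUnion] at hj0J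
      obtain ⟨i, hiJ, hj0i⟩ := hj0J
      have hmem := hJR hiJ
      rw [hR, Finset.mem_filter] at hmem
      exact hmem.2 hj0i
    obtain ⟨C, hC1, hC2⟩ := cover_lemma (∑ i ∈ R, (supp i).card) supp R (le_refl _) hsurR
    have hUR : R.biUnion supp ⊆ Finset.univ.erase j0 := by
      intro x hx
      rw [Finset.mem_biUnion] at hx
      obtain ⟨i, hiR, hxi⟩ := hx
      refine Finset.mem_erase.mpr ⟨?_, Finset.mem_univ x⟩
      intro hxj0
      have hmem := hiR
      rw [hR, Finset.mem_filter] at hmem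
      exact hmem.2 (hxj0 ▸ hxi)
    have hURcard : (R.biUnion supp).card ≤ n := by
      have h8 := Finset.card_le_card hUR
      rwa [Finset.card_erase_of_mem (Finset.mem_univ j0), Finset.card_univ,
        Fintype.card_fin] at h8
    refine ⟨insert j0 C, ?_, ?_⟩
    · have e1 := Finset.card_insert_le j0 C
      have e2 : (R.biUnion supp).card / 2 ≤ n / 2 := Nat.div_le_div_right hURcard
      omega
    · intro i
      by_cases hij0 : j0 ∈ supp i
      · exact ⟨j0, Finset.mem_insert_self _ _, (hsuppmem i j0).1 hij0⟩
      · have hiR : i ∈ R := by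
          rw [hR, Finset.mem_filter]
          exact ⟨Finset.mem_univ i, hij0⟩
        obtain ⟨c, hc1, hc2⟩ := hC2 i hiR
        exact ⟨c, Finset.mem_insert_of_mem hc1, (hsuppmem i c).1 hc2⟩
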